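/- With μ_s defined as in the recursive quasi-periodic construction (μ_0 = δ_0, μ_k = μ_{k-1} + (S_{-3^{k-1}} + S_{3^{k-1}}) T_k μ_{k-1}, with T_k the average of the 2k shifts by ±r_k j/k, r_k = 2^{-(k+1)^2}), the restriction of μ_j to the interval I_s = ((1-3^s)/2 - 1/3, (3^s-1)/2 + 1/3) equals μ_s for every j > s. -/

import Mathlib

open MeasureTheory
open scoped ENNReal

/-- `r k = 2^{-(k+1)^2}`. -/
noncomputable def r (k : ℕ) : ℝ := (2 : ℝ) ^ (-(((k : ℤ) + 1) ^ 2))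

/-- `S t` is the shift of a measure by `t`. -/
noncomputable def S (t : ℝ) (ρ : Measure ℝ) : Measure ℝ := ρ.map (· + t)

/-- `T k` averages the `2k` shifts by `± r_k j / k`, `j = 1, …, k`. -/
noncomputable def T (k : ℕ) (ρ : Measure ℝ) : Measure ℝ :=
  ((2 * k : ℝ≥0∞))⁻¹ •
    ∑ j ∈ Finset.Icc 1 k, (S (-(r k * j / k)) ρ + S (r k * j / k) ρ)

/-- `μ_0 = δ_0`, `μ_k = μ_{k-1} + (S_{-3^{k-1}} + S_{3^{k-1}}) T_k μ_{k-1}`. -/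
noncomputable def μseq : ℕ → Measure ℝ
  | 0 => Measure.dirac 0
  | k + 1 => μseq k +
      (S (-(3 ^ k : ℝ)) (T (k + 1) (μseq k)) + S ((3 ^ k : ℝ)) (T (k + 1) (μseq k)))

/-- The interval `I_s = ((1-3^s)/2 - 1/3, (3^s-1)/2 + 1/3)`. -/
noncomputable def I (s : ℕ) : Set ℝ :=
  Set.Ioo ((1 - 3 ^ s) / 2 - 1 / 3) ((3 ^ s - 1) / 2 + 1 / 3)

/-- cumulative slack -/
noncomputable def c : ℕ → ℝ
  | 0 => 0
  | k + 1 => c k + r (k + 1)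

lemma r_pos (k : ℕ) : 0 < r k := by unfold r; positivity

lemma c_nonneg (k : ℕ) : 0 ≤ c k := by
  induction k with
  | zero => simp [c]
  | succ k ih => have := r_pos (k+1); simp only [c]; linarith

lemma c_bound (k : ℕ) : c k + (2:ℝ) ^ (-((k:ℤ)+3)) ≤ 1/8 := by
  induction k with
  | zero => norm_num [c]
  | succ k ih =>
    have h1 : r (k+1) ≤ (2:ℝ) ^ (-((k:ℤ)+4)) := by
      unfold r
      apply zpow_le_zpow_right₀ (by norm_num)
      push_cast
      nlinarith [sq_nonneg ((k:ℤ))]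
    have h2 : (2:ℝ) ^ (-((k:ℤ)+4)) + (2:ℝ) ^ (-((k:ℤ)+4)) = (2:ℝ) ^ (-((k:ℤ)+3)) := by
      rw [show -((k:ℤ)+3) = (-((k:ℤ)+4)) + 1 by ring, zpow_add_one₀ (by norm_num : (2:ℝ) ≠ 0)]
      ring
    have key : c (k+1) + (2:ℝ) ^ (-((k:ℤ)+1+3)) ≤ c k + (2:ℝ) ^ (-((k:ℤ)+3)) := by
      show c k + r (k+1) + (2:ℝ) ^ (-((k:ℤ)+1+3)) ≤ _
      rw [show ((k:ℤ)+1+3) = ((k:ℤ)+4) by ring] at *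
      linarith
    calc c (k+1) + (2:ℝ) ^ (-(((k+1:ℕ):ℤ)+3)) ≤ c k + (2:ℝ) ^ (-((k:ℤ)+3)) := by
          push_cast; exact key
      _ ≤ 1/8 := ih

lemma c_le (k : ℕ) : c k ≤ 1/8 := by
  have h : (0:ℝ) < (2:ℝ) ^ (-((k:ℤ)+3)) := by positivity
  linarith [c_bound k]

def Ball (m b : ℝ) : Set ℝ := {x : ℝ | |x - m| ≤ b}

lemma ball_meas (m b : ℝ) : MeasurableSet (Ball m b) :=
  measurableSet_le ((measurable_id.sub_const m).abs) measurable_const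

def N (m b : ℝ) (ρ : Measure ℝ) : Prop := ρ (Ball m b)ᶜ = 0

lemma N.mono {m b m' b' : ℝ} {ρ : Measure ℝ} (h : N m b ρ)
    (hsub : ∀ x, |x - m| ≤ b → |x - m'| ≤ b') : N m' b' ρ := by
  refine measure_mono_null ?_ h
  intro x hx hx'
  exact hx (hsub x hx')

lemma N.shift {m b : ℝ} {ρ : Measure ℝ} (h : N m b ρ) (t : ℝ) :
    N (m + t) b (S t ρ) := by
  unfold N S
  rw [Measure.map_apply (measurable_add_const t) (ball_meas _ _).compl]
  have hset : (fun x => x + t) ⁻¹' (Ball (m+t) b)ᶜ = (Ball m b)ᶜ := by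
    ext x
    simp only [Set.mem_preimage, Set.mem_compl_iff, Ball, Set.mem_setOf_eq,
      add_sub_add_right_eq_sub]
  rw [hset]; exact h

lemma N.tnull {m b b' : ℝ} {ρ : Measure ℝ} (h : N m b ρ) (k : ℕ)
    (hb : b + r k ≤ b') : N m b' (T k ρ) := by
  unfold N T
  rw [Measure.smul_apply, Measure.finset_sum_apply]
  have key : ∀ t : ℝ, |t| ≤ r k → (S t ρ) (Ball m b')ᶜ = 0 := by
    intro t ht
    refine (h.shift t).mono fun x hx => ?_
    have h1 : |x - m| ≤ |x - (m + t)| + |t| := by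
      calc |x - m| = |(x - (m+t)) + t| := by ring_nf
        _ ≤ |x - (m+t)| + |t| := abs_add_le _ _
    linarith
  have hz : ∀ j ∈ Finset.Icc 1 k,
      (S (-(r k * j / k)) ρ + S (r k * j / k) ρ) (Ball m b')ᶜ = 0 := by
    intro j hj
    simp only [Finset.mem_Icc] at hj
    have hjk : (j:ℝ) / k ≤ 1 := by
      rcases Nat.eq_zero_or_pos k with hk | hk
      · omega
      · rw [div_le_one (by positivity)]; exact_mod_cast hj.2
    have hjk0 : 0 ≤ (j:ℝ)/k := div_nonneg (Nat.cast_nonneg j) (Nat.cast_nonneg k)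
    have habs : |r k * j / k| ≤ r k := by
      rw [abs_of_nonneg (div_nonneg (mul_nonneg (r_pos k).le (Nat.cast_nonneg j))
        (Nat.cast_nonneg k)), mul_div_assoc]
      nlinarith [r_pos k]
    rw [Measure.add_apply, key _ (by simpa using habs), key _ habs, add_zero]
  rw [Finset.sum_eq_zero hz, smul_zero]

lemma pow3_pos (k : ℕ) : (0:ℝ) < 3 ^ k := by positivity

lemma piece_null (k : ℕ) :
    N (-(3^k:ℝ)) ((3 ^ k - 1)/2 + c (k+1)) (S (-(3^k:ℝ)) (T (k + 1) (μseq k))) ∧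
    N ((3^k:ℝ)) ((3 ^ k - 1)/2 + c (k+1)) (S ((3^k:ℝ)) (T (k + 1) (μseq k))) ∧
    N 0 ((3 ^ k - 1)/2 + c k) (μseq k) := by
  induction k with
  | zero =>
    have base : N 0 ((3 ^ 0 - 1)/2 + c 0) (μseq 0) := by
      unfold N μseq
      rw [Measure.dirac_apply' _ (ball_meas _ _).compl]
      simp only [Set.indicator_apply, Set.mem_compl_iff, Ball, Set.mem_setOf_eq]
      norm_num [c]
    have hT : N 0 ((3 ^ 0 - 1)/2 + c 1) (T 1 (μseq 0)) :=
      base.tnull 1 (by simp only [c]; norm_num)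
    exact ⟨by simpa using hT.shift (-1:ℝ), by simpa using hT.shift (1:ℝ), base⟩
  | succ k ih =>
    obtain ⟨h₁, h₂, ih0⟩ := ih
    have hc : c k ≤ c (k+1) := by have := r_pos (k+1); simp only [c]; linarith
    have hmu : N 0 ((3 ^ (k+1) - 1)/2 + c (k+1)) (μseq (k+1)) := by
      show N 0 _ (μseq k + _)
      unfold N
      rw [Measure.add_apply, Measure.add_apply]
      have e1 : μseq k (Ball 0 ((3 ^ (k+1) - 1)/2 + c (k+1)))ᶜ = 0 := by
        refine ih0.mono fun x hx => ?_
        rw [abs_le] at hx ⊢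
        have h3 : (3:ℝ)^(k+1) = 3 * 3^k := by ring
        constructor <;> nlinarith [pow3_pos k]
      have e2 : (S (-(3^k:ℝ)) (T (k+1) (μseq k)))
          (Ball 0 ((3 ^ (k+1) - 1)/2 + c (k+1)))ᶜ = 0 := by
        refine h₁.mono fun x hx => ?_
        rw [abs_le] at hx ⊢
        have h3 : (3:ℝ)^(k+1) = 3 * 3^k := by ring
        constructor <;> nlinarith [pow3_pos k]
      have e3 : (S ((3^k:ℝ)) (T (k+1) (μseq k)))
          (Ball 0 ((3 ^ (k+1) - 1)/2 + c (k+1)))ᶜ = 0 := by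
        refine h₂.mono fun x hx => ?_
        rw [abs_le] at hx ⊢
        have h3 : (3:ℝ)^(k+1) = 3 * 3^k := by ring
        constructor <;> nlinarith [pow3_pos k]
      rw [e1, e2, e3]; simp
    have hT : N 0 ((3 ^ (k+1) - 1)/2 + c (k+2)) (T (k+2) (μseq (k+1))) :=
      hmu.tnull (k+2) (by simp only [c]; ring_nf; rfl)
    exact ⟨by simpa using hT.shift (-(3^(k+1):ℝ)), by simpa using hT.shift ((3^(k+1):ℝ)), hmu⟩

lemma mu_null (k : ℕ) : N 0 ((3 ^ k - 1)/2 + c k) (μseq k) := (piece_null k).2.2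

lemma mu_self_restrict (s : ℕ) : (μseq s).restrict (I s) = μseq s := by
  have hmeas : MeasurableSet (I s) := measurableSet_Ioo
  have h0 : (μseq s) (I s)ᶜ = 0 := by
    refine measure_mono_null ?_ (mu_null s)
    intro x hx hx'
    apply hx
    simp only [Ball, Set.mem_setOf_eq, sub_zero] at hx'
    rw [abs_le] at hx'
    have hc := c_le s
    have hc0 := c_nonneg s
    exact Set.mem_Ioo.mpr ⟨by linarith, by linarith⟩
  have := Measure.restrict_add_restrict_compl (μ := μseq s) hmeas
  rw [Measure.restrict_eq_zero.mpr h0, add_zero] at this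
  exact this

lemma piece_restrict_zero (s k : ℕ) (hsk : s ≤ k) :
    (S (-(3 ^ k : ℝ)) (T (k + 1) (μseq k)) + S ((3 ^ k : ℝ)) (T (k + 1) (μseq k))).restrict (I s)
      = 0 := by
  obtain ⟨h₁, h₂, -⟩ := piece_null k
  rw [Measure.restrict_eq_zero, Measure.add_apply]
  have hss : (3:ℝ)^s ≤ 3^k := by
    apply pow_le_pow_right₀ (by norm_num) hsk
  have hc := c_le (k+1)
  have hc0 := c_nonneg (k+1)
  have hsub : ∀ x ∈ I s, x ∈ (Ball (-(3^k:ℝ)) ((3 ^ k - 1)/2 + c (k+1)))ᶜ ∩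
      (Ball ((3^k:ℝ)) ((3 ^ k - 1)/2 + c (k+1)))ᶜ := by
    intro x hx
    simp only [I, Set.mem_Ioo] at hx
    constructor <;>
    · intro hmem
      simp only [Ball, Set.mem_setOf_eq] at hmem
      rw [abs_le] at hmem
      have := pow3_pos k
      have := pow3_pos s
      obtain ⟨ha, hb⟩ := hmem
      nlinarith
  have z1 : (S (-(3^k:ℝ)) (T (k+1) (μseq k))) (I s) = 0 :=
    measure_mono_null (fun x hx => (hsub x hx).1) h₁
  have z2 : (S ((3^k:ℝ)) (T (k+1) (μseq k))) (I s) = 0 :=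
    measure_mono_null (fun x hx => (hsub x hx).2) h₂
  rw [z1, z2, add_zero]


/-- The restriction of `μ_j` to `I_s` equals `μ_s` for every `j > s`. -/
theorem museq_restrict_eq (s j : ℕ) (h : s < j) :
    (μseq j).restrict (I s) = μseq s := by
  induction j with
  | zero => omega
  | succ j ih =>
    have hstep : (μseq (j+1)).restrict (I s)
        = (μseq j).restrict (I s) := by
      show (μseq j + _).restrict (I s) = _
      rw [Measure.restrict_add, piece_restrict_zero s j (by omega), add_zero]
    rcases Nat.lt_or_ge s j with hs | hs
    · rw [hstep, ih hs]
    · have : s = j := by omega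
      subst this
      rw [hstep, mu_self_restrict]
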